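/- Every subset of Mⁿ definable with parameters in the expanded structure (M; +, −, 0, 1, <, (α·)_{α∈F}, Q, ≺′) is a finite Boolean combination of sets of the forms {x ∈ Mⁿ : t(x) = 0}, {x ∈ Mⁿ : t(x) > 0}, {x ∈ Mⁿ : t(x) ∈ Q}, and {x ∈ Mⁿ : t(x) ≺′ 0}, where t(x) = α₁x₁ + ⋯ + αₙxₙ + b ranges over affine functions with α₁,…,αₙ ∈ F and b ∈ M. (This is the one-sorted content of the quantifier elimination theorem for the distal two-sorted expansion of T_POVS by an order ⪯ on the quotient sort M/Q.) -/

import Mathlib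

open FirstOrder Language Set

/-- Functions of the language of ordered `F`-vector spaces with a predicate:
`+`, `-`, `0`, `1`, and scalar multiplication by each element of `F`. -/
inductive LPFunc (F : Type) : ℕ → Type
  | add : LPFunc F 2
  | neg : LPFunc F 1
  | zero : LPFunc F 0
  | one : LPFunc F 0
  | smul : F → LPFunc F 1

/-- Relations: the order `<` and the unary predicate `Q`. -/
inductive LPRel : ℕ → Type
  | lt : LPRel 2
  | q : LPRel 1

/-- The language `L_P`. -/
def LP (F : Type) : Language := ⟨LPFunc F, LPRel⟩

variable (F M : Type) [Field F] [LinearOrder F] [IsStrictOrderedRing F] [AddCommGroup M] [LinearOrder M] [IsOrderedAddMonoid M] [Module F M]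

/-- The natural `L_P`-structure on an ordered `F`-vector space `M` with
distinguished element `one` and predicate `Q`. -/
def LPStruc (one : M) (Q : Set M) : (LP F).Structure M where
  funMap := fun {n} f x =>
    match n, f with
    | _, LPFunc.add => x 0 + x 1
    | _, LPFunc.neg => -(x 0)
    | _, LPFunc.zero => 0
    | _, LPFunc.one => one
    | _, LPFunc.smul c => c • x 0
  RelMap := fun {n} r x =>
    match n, r with
    | _, LPRel.lt => x 0 < x 1
    | _, LPRel.q => x 0 ∈ Q

/-- A subset of `N^n` is definable (with parameters from `N`). -/
def DefinableIn (L : Language) (N : Type) [L.Structure N] {n : ℕ} (S : Set (Fin n → N)) : Prop :=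
  Set.Definable (Set.univ : Set N) L S

/-- A subset of `N` is definable (with parameters from `N`). -/
def Definable1In (L : Language) (N : Type) [L.Structure N] (S : Set N) : Prop :=
  DefinableIn L N {x : Fin 1 → N | x 0 ∈ S}

/-- A function `N^n → N` is definable if its graph is definable. -/
def DefinableFunIn (L : Language) (N : Type) [L.Structure N] {n : ℕ}
    (f : (Fin n → N) → N) : Prop :=
  DefinableIn L N {x : Fin (n + 1) → N | x (Fin.last n) = f (fun i => x (Fin.castSucc i))}

/-- `S ⊆ N` is `P`-small: covered by the image of `Pⁿ` under a definable function. -/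
def SmallIn (L : Language) (N : Type) [L.Structure N] (P : Set N) (S : Set N) : Prop :=
  ∃ (n : ℕ) (f : (Fin n → N) → N), DefinableFunIn L N f ∧
    S ⊆ f '' {x : Fin n → N | ∀ i, x i ∈ P}

/-- Definability in the pair of ordered vector spaces. -/
def POVSDefinable (one : M) (Q : Set M) {n : ℕ} (S : Set (Fin n → M)) : Prop :=
  letI := LPStruc F M one Q
  DefinableIn (LP F) M S

/-- Definability of a unary set in the pair of ordered vector spaces. -/
def POVSDefinable1 (one : M) (Q : Set M) (S : Set M) : Prop :=
  letI := LPStruc F M one Q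
  Definable1In (LP F) M S

/-- Smallness in the pair of ordered vector spaces. -/
def POVSSmall (one : M) (Q : Set M) (S : Set M) : Prop :=
  letI := LPStruc F M one Q
  SmallIn (LP F) M Q S

/-- The embedding of `M` into `M ∪ {-∞, +∞}`. -/
def toExt (x : M) : WithBot (WithTop M) := ((x : WithTop M) : WithBot (WithTop M))

/-- The open interval `(a,b)` with endpoints from `M ∪ {-∞, +∞}`, as a subset of `M`. -/
def extIoo (a b : WithBot (WithTop M)) : Set M := {x : M | a < toExt M x ∧ toExt M x < b}

/-- The union of the cosets `c + Q` for `c ∈ C`. -/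
def cosetUnion (Q : Set M) (C : Finset M) : Set M := ⋃ c ∈ C, {x : M | x - c ∈ Q}

/-- A near-interval: a nonempty set of the form `(a,b) ∩ C` or `(a,b) \ C`, where
`a < b` in `M ∪ {-∞,+∞}` and `C` is a finite union of cosets of `Q`. -/
def NearInterval (Q : Set M) (S : Set M) : Prop :=
  S.Nonempty ∧ ∃ (a b : WithBot (WithTop M)) (C : Finset M), a < b ∧
    (S = extIoo M a b ∩ cosetUnion M Q C ∨ S = extIoo M a b \ cosetUnion M Q C)
/-- Finite Boolean combinations of sets from a family `B`. -/
inductive BoolComb {α : Type} (B : Set (Set α)) : Set α → Prop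
  | basic {s : Set α} : s ∈ B → BoolComb B s
  | univ : BoolComb B Set.univ
  | compl {s : Set α} : BoolComb B s → BoolComb B sᶜ
  | inter {s t : Set α} : BoolComb B s → BoolComb B t → BoolComb B (s ∩ t)

/-- Relations of the expanded language: `<`, `Q`, and the new order `≺′`. -/
inductive LPRel' : ℕ → Type
  | lt : LPRel' 2
  | q : LPRel' 1
  | plt : LPRel' 2

/-- The expanded language `L_P ∪ {≺′}`. -/
def LP' (F : Type) : Language := ⟨LPFunc F, LPRel'⟩

/-- The natural structure for the expanded language, where `x ≺′ y` iff
`x + Q ≺ y + Q` for a given relation `≺` on the quotient `M ⧸ Q`. -/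
def LP'Struc (one : M) (Q : Submodule F M) (prec : (M ⧸ Q) → (M ⧸ Q) → Prop) :
    (LP' F).Structure M where
  funMap := fun {n} f x =>
    match n, f with
    | _, LPFunc.add => x 0 + x 1
    | _, LPFunc.neg => -(x 0)
    | _, LPFunc.zero => 0
    | _, LPFunc.one => one
    | _, LPFunc.smul c => c • x 0
  RelMap := fun {n} r x =>
    match n, r with
    | _, LPRel'.lt => x 0 < x 1
    | _, LPRel'.q => x 0 ∈ Q
    | _, LPRel'.plt => prec (Submodule.Quotient.mk (x 0)) (Submodule.Quotient.mk (x 1))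

section QEAux


section PartA
variable {F M : Type} [Field F] [LinearOrder F] [IsStrictOrderedRing F] [AddCommGroup M] [LinearOrder M] [IsOrderedAddMonoid M] [Module F M]

structure QEHyp (F M : Type) [Field F] [LinearOrder F] [IsStrictOrderedRing F] [AddCommGroup M] [LinearOrder M] [IsOrderedAddMonoid M]
    [Module F M] where
  hsmul : ∀ (c : F) (x : M), 0 < c → 0 < x → 0 < c • x
  one : M
  hone : 0 < one
  Q : Submodule F M
  hQproper : (Q : Set M) ≠ Set.univ
  hQdense : ∀ a b : M, a < b → ∃ q ∈ Q, a < q ∧ q < b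
  prec : (M ⧸ Q) → (M ⧸ Q) → Prop
  hirrefl : ∀ u, ¬ prec u u
  htrans : ∀ u v w, prec u v → prec v w → prec u w
  htotal : ∀ u v, prec u v ∨ u = v ∨ prec v u
  htransl : ∀ u v w, prec u v → prec (u + w) (v + w)
  hscalar : ∀ (c : F) (v : M ⧸ Q), 0 < c → prec 0 v → prec 0 (c • v)

namespace QEHyp
variable (H : QEHyp F M)

/-- `mk` for the quotient. -/
abbrev mk' (x : M) : M ⧸ H.Q := Submodule.Quotient.mk x

lemma prec_sub_iff (u v : M ⧸ H.Q) : H.prec (u - v) 0 ↔ H.prec u v := by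
  constructor
  · intro h
    have := H.htransl _ _ v h
    simpa using this
  · intro h
    have := H.htransl _ _ (-v) h
    simpa [sub_eq_add_neg] using this

lemma prec_mk_sub_iff (x y : M) : H.prec (H.mk' (x - y)) 0 ↔ H.prec (H.mk' x) (H.mk' y) := by
  have : H.mk' (x - y) = H.mk' x - H.mk' y := by
    simp [mk', Submodule.Quotient.mk_sub]
  rw [this, prec_sub_iff]

lemma prec_neg_iff (u : M ⧸ H.Q) : H.prec (-u) 0 ↔ H.prec 0 u := by
  constructor
  · intro h; have := H.htransl _ _ u h; simpa using this
  · intro h; have := H.htransl _ _ (-u) h; simpa using this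

lemma prec_zero_smul {c : F} (hc : 0 < c) (u : M ⧸ H.Q) :
    H.prec 0 (c • u) ↔ H.prec 0 u := by
  constructor
  · intro h
    have := H.hscalar c⁻¹ _ (by positivity) h
    rwa [smul_smul, inv_mul_cancel₀ hc.ne', one_smul] at this
  · exact H.hscalar c u hc

lemma prec_smul_zero {c : F} (hc : 0 < c) (u : M ⧸ H.Q) :
    H.prec (c • u) 0 ↔ H.prec u 0 := by
  have h1 : ∀ w : M ⧸ H.Q, H.prec w 0 ↔ H.prec 0 (-w) := by
    intro w; rw [← prec_neg_iff, neg_neg]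
  rw [h1, h1 u, ← smul_neg, prec_zero_smul H hc]

noncomputable def lo : LinearOrder (M ⧸ H.Q) where
  le u v := H.prec u v ∨ u = v
  lt := H.prec
  le_refl u := Or.inr rfl
  le_trans u v w huv hvw := by
    rcases huv with h | rfl
    · rcases hvw with h' | rfl
      · exact Or.inl (H.htrans _ _ _ h h')
      · exact Or.inl h
    · exact hvw
  le_antisymm u v huv hvu := by
    rcases huv with h | rfl
    · rcases hvu with h' | rfl
      · exact absurd (H.htrans _ _ _ h h') (H.hirrefl u)
      · rfl
    · rfl
  le_total u v := by
    rcases H.htotal u v with h | rfl | h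
    · exact Or.inl (Or.inl h)
    · exact Or.inl (Or.inr rfl)
    · exact Or.inr (Or.inl h)
  lt_iff_le_not_ge u v := by
    constructor
    · intro h
      refine ⟨Or.inl h, ?_⟩
      rintro (h' | rfl)
      · exact absurd (H.htrans _ _ _ h h') (H.hirrefl u)
      · exact H.hirrefl _ h
    · rintro ⟨h | rfl, h2⟩
      · exact h
      · exact absurd (Or.inr rfl) h2
  toDecidableLE := fun _ _ => Classical.dec _

lemma lo_lt_iff (u v : M ⧸ H.Q) : (letI := H.lo; u < v) ↔ H.prec u v := Iff.rfl

lemma lo_densely : letI := H.lo; DenselyOrdered (M ⧸ H.Q) := by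
  letI := H.lo
  constructor
  intro u v huv
  have hd : H.prec 0 (v - u) := by
    rw [← prec_neg_iff, neg_sub, prec_sub_iff]; exact huv
  have hh : H.prec 0 ((2⁻¹ : F) • (v - u)) := H.hscalar _ _ (by norm_num) hd
  refine ⟨u + (2⁻¹ : F) • (v - u), ?_, ?_⟩
  · show H.prec u _
    have := H.htransl _ _ u hh
    simpa [add_comm] using this
  · show H.prec _ v
    rw [← prec_sub_iff]
    have h2 : v - u - (2⁻¹ : F) • (v - u) = (2⁻¹ : F) • (v - u) := by
      rw [sub_eq_iff_eq_add, ← add_smul]; norm_num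
    have key2 : ∀ w : M ⧸ H.Q, u + w - v = -(v - u - w) := fun w => by abel
    rw [key2, h2, prec_neg_iff]
    exact hh

lemma exists_pos : ∃ p : M ⧸ H.Q, H.prec 0 p := by
  have : ∃ m : M, m ∉ H.Q := by
    by_contra h
    push_neg at h
    exact H.hQproper (Set.eq_univ_of_forall h)
  obtain ⟨m, hm⟩ := this
  have hm0 : H.mk' m ≠ 0 := by
    simpa [Submodule.Quotient.mk_eq_zero] using hm
  rcases H.htotal 0 (H.mk' m) with h | h | h
  · exact ⟨_, h⟩
  · exact absurd h.symm hm0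
  · refine ⟨-H.mk' m, ?_⟩
    have hneg : H.mk' m = -(-H.mk' m) := (neg_neg _).symm
    rw [hneg] at h
    exact (H.prec_neg_iff _).mp h

lemma lo_noMax : letI := H.lo; NoMaxOrder (M ⧸ H.Q) := by
  letI := H.lo
  obtain ⟨p, hp⟩ := H.exists_pos
  constructor
  intro u
  refine ⟨u + p, ?_⟩
  show H.prec u (u + p)
  have := H.htransl _ _ u hp
  simpa [add_comm] using this

lemma lo_noMin : letI := H.lo; NoMinOrder (M ⧸ H.Q) := by
  letI := H.lo
  obtain ⟨p, hp⟩ := H.exists_pos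
  constructor
  intro u
  refine ⟨u - p, ?_⟩
  show H.prec (u - p) u
  rw [← prec_sub_iff]
  have : u - p - u = -p := by abel
  rw [this, prec_neg_iff]
  exact hp

lemma quot_infinite : Infinite (M ⧸ H.Q) := by
  obtain ⟨p, hp⟩ := H.exists_pos
  have hp0 : p ≠ 0 := by
    rintro rfl; exact H.hirrefl 0 hp
  have : Function.Injective (fun c : F => c • p) := by
    intro c c' h
    by_contra hne
    have h' : c • p = c' • p := h
    have hsub : (c - c') • p = 0 := by
      rw [sub_smul, h', sub_self]
    have : p = 0 := by
      have := congrArg (fun x => (c - c')⁻¹ • x) hsub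
      simpa [smul_smul, inv_mul_cancel₀ (sub_ne_zero.mpr hne)] using this
    exact hp0 this
  exact Infinite.of_injective _ this

lemma exists_class (P R : List (M ⧸ H.Q)) (X : List (M ⧸ H.Q))
    (h : ∀ r ∈ R, ∀ p ∈ P, H.prec r p) :
    ∃ v : M ⧸ H.Q, (∀ p ∈ P, H.prec v p) ∧ (∀ r ∈ R, H.prec r v) ∧ ∀ x ∈ X, v ≠ x := by
  letI := H.lo
  haveI := H.lo_densely
  haveI := H.lo_noMax
  haveI := H.lo_noMin
  haveI := H.quot_infinite
  classical
  have key : ({v : M ⧸ H.Q | (∀ p ∈ P, H.prec v p) ∧ (∀ r ∈ R, H.prec r v)}).Infinite := by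
    rcases List.eq_nil_or_concat' P with rfl | ⟨P', p₀, rfl⟩ <;>
      rcases List.eq_nil_or_concat' R with rfl | ⟨R', r₀, rfl⟩
    · simp only [List.not_mem_nil, false_implies, implies_true, true_and]
      simpa using Set.infinite_univ
    · have hR : (R' ++ [r₀]).toFinset.Nonempty := ⟨r₀, by simp⟩
      refine Set.Infinite.mono ?_ (Set.Ioi_infinite ((R' ++ [r₀]).toFinset.max' hR))
      intro v hv
      simp only [Set.mem_setOf_eq, List.not_mem_nil, false_implies, implies_true, true_and]
      intro r hr
      exact lt_of_le_of_lt (Finset.le_max' _ r (by simp at hr ⊢; tauto)) hv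
    · have hP : (P' ++ [p₀]).toFinset.Nonempty := ⟨p₀, by simp⟩
      refine Set.Infinite.mono ?_ (Set.Iio_infinite ((P' ++ [p₀]).toFinset.min' hP))
      intro v hv
      refine ⟨fun p hp => lt_of_lt_of_le hv (Finset.min'_le _ p (by simp at hp ⊢; tauto)), ?_⟩
      simp
    · have hP : (P' ++ [p₀]).toFinset.Nonempty := ⟨p₀, by simp⟩
      have hR : (R' ++ [r₀]).toFinset.Nonempty := ⟨r₀, by simp⟩
      have hlt : (R' ++ [r₀]).toFinset.max' hR < (P' ++ [p₀]).toFinset.min' hP := by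
        have h1 := Finset.max'_mem _ hR
        have h2 := Finset.min'_mem _ hP
        rw [List.mem_toFinset] at h1 h2
        exact h _ h1 _ h2
      refine Set.Infinite.mono ?_ (Set.Ioo_infinite hlt)
      intro v hv
      refine ⟨fun p hp => lt_of_lt_of_le hv.2 (Finset.min'_le _ p (by simp at hp ⊢; tauto)),
        fun r hr => lt_of_le_of_lt (Finset.le_max' _ r (by simp at hr ⊢; tauto)) hv.1⟩
  obtain ⟨v, hv, hvX⟩ := (key.diff X.toFinset.finite_toSet).nonempty
  refine ⟨v, hv.1, hv.2, fun x hx hvx => hvX ?_⟩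
  rw [hvx]
  simp only [Finset.mem_coe, List.mem_toFinset]
  exact hx

include H in
lemma exists_interval (L U : List M) (h : ∀ l ∈ L, ∀ u ∈ U, l < u) :
    ∃ a b : M, a < b ∧ ∀ y : M, a < y → y < b → (∀ l ∈ L, l < y) ∧ ∀ u ∈ U, y < u := by
  classical
  rcases List.eq_nil_or_concat' L with rfl | ⟨L', l₀, rfl⟩ <;>
    rcases List.eq_nil_or_concat' U with rfl | ⟨U', u₀, rfl⟩
  · exact ⟨0, H.one, H.hone, fun y _ _ => ⟨by simp, by simp⟩⟩
  · have hU : (U' ++ [u₀]).toFinset.Nonempty := ⟨u₀, by simp⟩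
    set b := (U' ++ [u₀]).toFinset.min' hU with hb
    refine ⟨b - H.one, b, by simpa using H.hone, fun y _ hy => ⟨by simp, fun u hu => ?_⟩⟩
    exact lt_of_lt_of_le hy (Finset.min'_le _ u (by simp at hu ⊢; tauto))
  · have hL : (L' ++ [l₀]).toFinset.Nonempty := ⟨l₀, by simp⟩
    set a := (L' ++ [l₀]).toFinset.max' hL with ha
    refine ⟨a, a + H.one, by simpa using H.hone, fun y hy _ => ⟨fun l hl => ?_, by simp⟩⟩
    exact lt_of_le_of_lt (Finset.le_max' _ l (by simp at hl ⊢; tauto)) hy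
  · have hL : (L' ++ [l₀]).toFinset.Nonempty := ⟨l₀, by simp⟩
    have hU : (U' ++ [u₀]).toFinset.Nonempty := ⟨u₀, by simp⟩
    have hlt : (L' ++ [l₀]).toFinset.max' hL < (U' ++ [u₀]).toFinset.min' hU := by
      have h1 := Finset.max'_mem _ hL
      have h2 := Finset.min'_mem _ hU
      rw [List.mem_toFinset] at h1 h2
      exact h _ h1 _ h2
    refine ⟨_, _, hlt, fun y hy hy' => ⟨fun l hl => ?_, fun u hu => ?_⟩⟩
    · exact lt_of_le_of_lt (Finset.le_max' _ l (by simp at hl ⊢; tauto)) hy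
    · exact lt_of_lt_of_le hy' (Finset.min'_le _ u (by simp at hu ⊢; tauto))

lemma exists_coset_mem (a b : M) (hab : a < b) (v : M ⧸ H.Q) :
    ∃ y : M, a < y ∧ y < b ∧ H.mk' y = v := by
  obtain ⟨r, rfl⟩ := Submodule.Quotient.mk_surjective H.Q v
  obtain ⟨q, hq, h1, h2⟩ := H.hQdense (a - r) (b - r) (sub_lt_sub_right hab r)
  refine ⟨r + q, ?_, ?_, ?_⟩
  · have := sub_lt_iff_lt_add.mp h1
    rwa [add_comm q r] at this
  · have := lt_sub_iff_add_lt.mp h2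
    rwa [add_comm q r] at this
  · show Submodule.Quotient.mk (r + q) = Submodule.Quotient.mk r
    rw [Submodule.Quotient.eq]
    simpa using hq

/-- Membership of a coset difference. -/
lemma sub_mem_iff (x y : M) : x - y ∈ H.Q ↔ H.mk' x = H.mk' y :=
  (Submodule.Quotient.eq H.Q).symm

lemma existsY_nil (L U Cout P R : List M) :
    (∃ y : M, (∀ l ∈ L, l < y) ∧ (∀ u ∈ U, y < u) ∧ (∀ d ∈ Cout, y - d ∉ H.Q) ∧
      (∀ p ∈ P, H.prec (H.mk' (y - p)) 0) ∧ (∀ r ∈ R, H.prec (H.mk' (r - y)) 0)) ↔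
    ((∀ l ∈ L, ∀ u ∈ U, l < u) ∧ ∀ r ∈ R, ∀ p ∈ P, H.prec (H.mk' (r - p)) 0) := by
  constructor
  · rintro ⟨y, h1, h2, h3, h4, h5⟩
    refine ⟨fun l hl u hu => lt_trans (h1 l hl) (h2 u hu), fun r hr p hp => ?_⟩
    rw [prec_mk_sub_iff]
    exact H.htrans _ _ _ ((H.prec_mk_sub_iff r y).mp (h5 r hr))
      ((H.prec_mk_sub_iff y p).mp (h4 p hp))
  · rintro ⟨hLU, hRP⟩
    obtain ⟨a, b, hab, hI⟩ := H.exists_interval L U hLU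
    obtain ⟨v, hvP, hvR, hvX⟩ := H.exists_class (P.map H.mk') (R.map H.mk') (Cout.map H.mk')
      (by
        intro r hr p hp
        simp only [List.mem_map] at hr hp
        obtain ⟨r', hr', rfl⟩ := hr
        obtain ⟨p', hp', rfl⟩ := hp
        rw [← prec_mk_sub_iff]
        exact hRP r' hr' p' hp')
    obtain ⟨y, hay, hyb, hyv⟩ := H.exists_coset_mem a b hab v
    refine ⟨y, (hI y hay hyb).1, (hI y hay hyb).2, ?_, ?_, ?_⟩
    · intro d hd hmem
      rw [sub_mem_iff] at hmem
      exact hvX (H.mk' d) (List.mem_map_of_mem hd) (hyv ▸ hmem)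
    · intro p hp
      rw [prec_mk_sub_iff, hyv]
      exact hvP _ (List.mem_map_of_mem hp)
    · intro r hr
      rw [prec_mk_sub_iff, hyv]
      exact hvR _ (List.mem_map_of_mem hr)

lemma existsY_cons (c : M) (L U Cin Cout P R : List M) :
    (∃ y : M, (∀ l ∈ L, l < y) ∧ (∀ u ∈ U, y < u) ∧ (y - c ∈ H.Q ∧ ∀ c' ∈ Cin, y - c' ∈ H.Q) ∧
      (∀ d ∈ Cout, y - d ∉ H.Q) ∧
      (∀ p ∈ P, H.prec (H.mk' (y - p)) 0) ∧ (∀ r ∈ R, H.prec (H.mk' (r - y)) 0)) ↔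
    ((∀ l ∈ L, ∀ u ∈ U, l < u) ∧ (∀ c' ∈ Cin, c - c' ∈ H.Q) ∧ (∀ d ∈ Cout, c - d ∉ H.Q) ∧
      (∀ p ∈ P, H.prec (H.mk' (c - p)) 0) ∧ ∀ r ∈ R, H.prec (H.mk' (r - c)) 0) := by
  constructor
  · rintro ⟨y, h1, h2, ⟨hc, h3⟩, h4, h5, h6⟩
    rw [sub_mem_iff] at hc
    refine ⟨fun l hl u hu => lt_trans (h1 l hl) (h2 u hu), fun c' hc' => ?_, fun d hd => ?_,
      fun p hp => ?_, fun r hr => ?_⟩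
    · rw [sub_mem_iff, ← hc]
      exact (H.sub_mem_iff y c').mp (h3 c' hc')
    · intro hmem
      rw [sub_mem_iff] at hmem
      exact h4 d hd ((H.sub_mem_iff y d).mpr (hc.trans hmem))
    · rw [prec_mk_sub_iff, ← hc, ← prec_mk_sub_iff]
      exact h5 p hp
    · rw [prec_mk_sub_iff, ← hc, ← prec_mk_sub_iff]
      exact h6 r hr
  · rintro ⟨hLU, h3, h4, h5, h6⟩
    obtain ⟨a, b, hab, hI⟩ := H.exists_interval L U hLU
    obtain ⟨y, hay, hyb, hyv⟩ := H.exists_coset_mem a b hab (H.mk' c)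
    rw [← sub_mem_iff] at hyv
    have hyc : H.mk' y = H.mk' c := (H.sub_mem_iff y c).mp hyv
    refine ⟨y, (hI y hay hyb).1, (hI y hay hyb).2, ⟨hyv, fun c' hc' => ?_⟩, fun d hd => ?_,
      fun p hp => ?_, fun r hr => ?_⟩
    · rw [sub_mem_iff, hyc, ← sub_mem_iff]
      exact h3 c' hc'
    · intro hmem
      rw [sub_mem_iff, hyc, ← sub_mem_iff] at hmem
      exact h4 d hd hmem
    · rw [prec_mk_sub_iff, hyc, ← prec_mk_sub_iff]
      exact h5 p hp
    · rw [prec_mk_sub_iff, hyc, ← prec_mk_sub_iff]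
      exact h6 r hr

end QEHyp
end PartA

section Syntactic
variable {F M : Type} [Field F] [LinearOrder F] [IsStrictOrderedRing F] [AddCommGroup M] [LinearOrder M] [IsOrderedAddMonoid M] [Module F M]

/-- Affine function. -/
def aff {k : ℕ} (c : Fin k → F) (b : M) (x : Fin k → M) : M := (∑ i, c i • x i) + b

lemma aff_sub {k : ℕ} (c c' : Fin k → F) (b b' : M) (x : Fin k → M) :
    aff (c - c') (b - b') x = aff c b x - aff c' b' x := by
  simp only [aff, Pi.sub_apply, sub_smul, Finset.sum_sub_distrib]
  abel

lemma aff_neg {k : ℕ} (c : Fin k → F) (b : M) (x : Fin k → M) :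
    aff (-c) (-b) x = -aff c b x := by
  simp only [aff, Pi.neg_apply, neg_smul, Finset.sum_neg_distrib]
  abel

lemma aff_add {k : ℕ} (c c' : Fin k → F) (b b' : M) (x : Fin k → M) :
    aff (c + c') (b + b') x = aff c b x + aff c' b' x := by
  simp only [aff, Pi.add_apply, add_smul, Finset.sum_add_distrib]
  abel

lemma aff_smul {k : ℕ} (d : F) (c : Fin k → F) (b : M) (x : Fin k → M) :
    aff (d • c) (d • b) x = d • aff c b x := by
  simp only [aff, Pi.smul_apply, smul_eq_mul, mul_smul, smul_add, Finset.smul_sum]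

/-- Kinds of literals. -/
inductive LKind : Type
  | keq | kgt | kin | knin | kplt
deriving DecidableEq

/-- A literal: a kind together with affine data. -/
abbrev Lit (F M : Type) (k : ℕ) : Type := LKind × (Fin k → F) × M

namespace QEHyp
variable (H : QEHyp F M)

/-- The set defined by a literal. -/
def lset {k : ℕ} : Lit F M k → Set (Fin k → M)
  | (LKind.keq, c, b) => {x | aff c b x = 0}
  | (LKind.kgt, c, b) => {x | 0 < aff c b x}
  | (LKind.kin, c, b) => {x | aff c b x ∈ H.Q}
  | (LKind.knin, c, b) => {x | aff c b x ∉ H.Q}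
  | (LKind.kplt, c, b) => {x | H.prec (H.mk' (aff c b x)) 0}

/-- The set defined by a conjunction of literals. -/
def cellSet {k : ℕ} (cell : List (Lit F M k)) : Set (Fin k → M) :=
  {x | ∀ l ∈ cell, x ∈ H.lset l}

/-- Finite unions of cells. -/
def NiceSet {k : ℕ} (S : Set (Fin k → M)) : Prop :=
  ∃ cells : List (List (Lit F M k)), S = {x | ∃ cell ∈ cells, x ∈ H.cellSet cell}

/-- The basic sets. -/
def BasicSet {k : ℕ} : Set (Set (Fin k → M)) :=
  {T | ∃ (c : Fin k → F) (b : M),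
    T = {x | (∑ i, c i • x i) + b = 0} ∨
    T = {x | 0 < (∑ i, c i • x i) + b} ∨
    T = {x | (∑ i, c i • x i) + b ∈ H.Q} ∨
    T = {x | H.prec (Submodule.Quotient.mk ((∑ i, c i • x i) + b)) 0}}

lemma bc_union {α : Type} {B : Set (Set α)} {s t : Set α} (hs : BoolComb B s)
    (ht : BoolComb B t) : BoolComb B (s ∪ t) := by
  have := (hs.compl.inter ht.compl).compl
  rwa [Set.compl_inter, _root_.compl_compl, _root_.compl_compl] at this

lemma bc_empty {α : Type} {B : Set (Set α)} : BoolComb B (∅ : Set α) := by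
  have := (BoolComb.univ (B := B)).compl
  rwa [Set.compl_univ] at this

lemma lit_bc {k : ℕ} (l : Lit F M k) : BoolComb (H.BasicSet (k := k)) (H.lset l) := by
  obtain ⟨kd, c, b⟩ := l
  cases kd
  · exact BoolComb.basic ⟨c, b, Or.inl rfl⟩
  · exact BoolComb.basic ⟨c, b, Or.inr (Or.inl rfl)⟩
  · exact BoolComb.basic ⟨c, b, Or.inr (Or.inr (Or.inl rfl))⟩
  · have : H.lset (LKind.knin, c, b) = ({x | aff c b x ∈ H.Q} : Set (Fin k → M))ᶜ := rfl
    rw [this]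
    refine BoolComb.compl (BoolComb.basic ?_)
    exact ⟨c, b, Or.inr (Or.inr (Or.inl rfl))⟩
  · exact BoolComb.basic ⟨c, b, Or.inr (Or.inr (Or.inr rfl))⟩

lemma cellSet_nil {k : ℕ} : H.cellSet ([] : List (Lit F M k)) = Set.univ := by
  ext x; simp [cellSet]

lemma cellSet_cons {k : ℕ} (l : Lit F M k) (cell : List (Lit F M k)) :
    H.cellSet (l :: cell) = H.lset l ∩ H.cellSet cell := by
  ext x; simp [cellSet]

lemma cellSet_append {k : ℕ} (c₁ c₂ : List (Lit F M k)) :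
    H.cellSet (c₁ ++ c₂) = H.cellSet c₁ ∩ H.cellSet c₂ := by
  ext x; simp [cellSet, or_imp, forall_and]

lemma cell_bc {k : ℕ} (cell : List (Lit F M k)) : BoolComb H.BasicSet (H.cellSet cell) := by
  induction cell with
  | nil => rw [cellSet_nil]; exact BoolComb.univ
  | cons l rest ih => rw [cellSet_cons]; exact (H.lit_bc l).inter ih

lemma nice_bc {k : ℕ} {S : Set (Fin k → M)} (h : H.NiceSet S) : BoolComb H.BasicSet S := by
  obtain ⟨cells, rfl⟩ := h
  induction cells with
  | nil => simpa using bc_empty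
  | cons cell rest ih =>
      have : {x | ∃ c ∈ cell :: rest, x ∈ H.cellSet c} =
          H.cellSet cell ∪ {x | ∃ c ∈ rest, x ∈ H.cellSet c} := by
        ext x; simp [or_and_right, exists_or]
      rw [this]
      exact bc_union (H.cell_bc cell) ih

end QEHyp

end Syntactic


section Nice
variable {F M : Type} [Field F] [LinearOrder F] [IsStrictOrderedRing F] [AddCommGroup M] [LinearOrder M] [IsOrderedAddMonoid M] [Module F M]

/-- Literals defining the complement of a literal. -/
def negLit {k : ℕ} : Lit F M k → List (Lit F M k)
  | (LKind.keq, c, b) => [(LKind.kgt, c, b), (LKind.kgt, -c, -b)]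
  | (LKind.kgt, c, b) => [(LKind.keq, c, b), (LKind.kgt, -c, -b)]
  | (LKind.kin, c, b) => [(LKind.knin, c, b)]
  | (LKind.knin, c, b) => [(LKind.kin, c, b)]
  | (LKind.kplt, c, b) => [(LKind.kin, c, b), (LKind.kplt, -c, -b)]

namespace QEHyp
variable (H : QEHyp F M)

lemma negLit_spec {k : ℕ} (l : Lit F M k) :
    (H.lset l)ᶜ = {x | ∃ l' ∈ negLit l, x ∈ H.lset l'} := by
  obtain ⟨kd, c, b⟩ := l
  ext x
  cases kd
  case keq =>
    simp only [negLit, lset, Set.mem_compl_iff, Set.mem_setOf_eq, List.mem_cons,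
      List.mem_singleton, List.not_mem_nil, or_false, exists_eq_or_imp, exists_eq_left, aff_neg]
    constructor
    · intro h
      rcases lt_or_gt_of_ne h with h' | h'
      · exact Or.inr (neg_pos.mpr h')
      · exact Or.inl h'
    · rintro (h | h) <;> intro h0 <;> rw [h0] at h <;> simp at h
  case kgt =>
    simp only [negLit, lset, Set.mem_compl_iff, Set.mem_setOf_eq, List.mem_cons,
      List.mem_singleton, List.not_mem_nil, or_false, exists_eq_or_imp, exists_eq_left, aff_neg]
    constructor
    · intro h
      rcases lt_or_eq_of_le (not_lt.mp h) with h' | h'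
      · exact Or.inr (neg_pos.mpr h')
      · exact Or.inl h'
    · rintro (h | h)
      · rw [h]; simp
      · intro h0
        exact lt_irrefl (0 : M) (lt_trans h0 (neg_pos.mp h))
  case kin =>
    simp only [negLit, lset, Set.mem_compl_iff, Set.mem_setOf_eq, List.mem_singleton,
      List.not_mem_nil, or_false, exists_eq_left]
  case knin =>
    simp only [negLit, lset, Set.mem_compl_iff, Set.mem_setOf_eq, List.mem_singleton,
      List.not_mem_nil, or_false, exists_eq_left]
    exact not_not
  case kplt =>
    simp only [negLit, lset, Set.mem_compl_iff, Set.mem_setOf_eq, List.mem_cons,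
      List.mem_singleton, List.not_mem_nil, or_false, exists_eq_or_imp, exists_eq_left, aff_neg]
    have hneg : H.mk' (-aff c b x) = -(H.mk' (aff c b x)) := by simp [mk']
    constructor
    · intro h
      rcases H.htotal (H.mk' (aff c b x)) 0 with h' | h' | h'
      · exact absurd h' h
      · exact Or.inl ((Submodule.Quotient.mk_eq_zero H.Q).mp h')
      · exact Or.inr (by rw [hneg, prec_neg_iff]; exact h')
    · rintro (h | h)
      · intro h0
        have hz : H.mk' (aff c b x) = 0 := (Submodule.Quotient.mk_eq_zero H.Q).mpr h
        rw [hz] at h0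
        exact H.hirrefl 0 h0
      · intro h0
        rw [hneg, prec_neg_iff] at h
        exact H.hirrefl _ (H.htrans _ _ _ h0 h)

lemma nice_union {k : ℕ} {S T : Set (Fin k → M)} (hS : H.NiceSet S) (hT : H.NiceSet T) :
    H.NiceSet (S ∪ T) := by
  obtain ⟨cs, rfl⟩ := hS
  obtain ⟨ct, rfl⟩ := hT
  refine ⟨cs ++ ct, ?_⟩
  ext x
  simp [List.mem_append, or_and_right, exists_or]

lemma nice_inter {k : ℕ} {S T : Set (Fin k → M)} (hS : H.NiceSet S) (hT : H.NiceSet T) :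
    H.NiceSet (S ∩ T) := by
  obtain ⟨cs, rfl⟩ := hS
  obtain ⟨ct, rfl⟩ := hT
  refine ⟨cs.flatMap (fun c => ct.map (fun d => c ++ d)), ?_⟩
  ext x
  simp only [Set.mem_inter_iff, Set.mem_setOf_eq, List.mem_flatMap, List.mem_map]
  constructor
  · rintro ⟨⟨c, hc, hxc⟩, ⟨d, hd, hxd⟩⟩
    refine ⟨c ++ d, ⟨c, hc, d, hd, rfl⟩, ?_⟩
    rw [cellSet_append]
    exact ⟨hxc, hxd⟩
  · rintro ⟨cd, ⟨c, hc, d, hd, rfl⟩, hx⟩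
    rw [cellSet_append] at hx
    exact ⟨⟨c, hc, hx.1⟩, ⟨d, hd, hx.2⟩⟩

lemma nice_lit {k : ℕ} (l : Lit F M k) : H.NiceSet (H.lset l) := by
  refine ⟨[ [l] ], ?_⟩
  ext x
  simp only [Set.mem_setOf_eq, List.mem_singleton, exists_eq_left, cellSet, forall_eq]

lemma nice_empty {k : ℕ} : H.NiceSet (∅ : Set (Fin k → M)) := ⟨[], by ext x; simp⟩

lemma nice_univ {k : ℕ} : H.NiceSet (Set.univ : Set (Fin k → M)) :=
  ⟨[ ([] : List (Lit F M k)) ], by ext x; simp [cellSet]⟩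

lemma nice_cell_compl {k : ℕ} (cell : List (Lit F M k)) : H.NiceSet (H.cellSet cell)ᶜ := by
  induction cell with
  | nil => rw [cellSet_nil, Set.compl_univ]; exact H.nice_empty
  | cons l rest ih =>
      rw [cellSet_cons, Set.compl_inter]
      refine H.nice_union ?_ ih
      rw [negLit_spec]
      refine ⟨(negLit l).map (fun l' => [l']), ?_⟩
      ext x
      simp only [Set.mem_setOf_eq]
      constructor
      · rintro ⟨l', hl', hx⟩
        refine ⟨[l'], List.mem_map_of_mem hl', ?_⟩
        intro a ha
        rw [List.mem_singleton] at ha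
        subst ha
        exact hx
      · rintro ⟨c, hc, hx⟩
        obtain ⟨l', hl', rfl⟩ := List.mem_map.mp hc
        exact ⟨l', hl', hx l' (List.mem_singleton_self _)⟩

lemma nice_compl {k : ℕ} {S : Set (Fin k → M)} (hS : H.NiceSet S) : H.NiceSet Sᶜ := by
  obtain ⟨cs, rfl⟩ := hS
  induction cs with
  | nil => simpa using H.nice_univ
  | cons cell rest ih =>
      have : {x | ∃ c ∈ cell :: rest, x ∈ H.cellSet c} =
          H.cellSet cell ∪ {x | ∃ c ∈ rest, x ∈ H.cellSet c} := by
        ext x; simp [or_and_right, exists_or]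
      rw [this, Set.compl_union]
      exact H.nice_inter (H.nice_cell_compl cell) ih

lemma bc_nice {k : ℕ} {S : Set (Fin k → M)} (h : BoolComb (H.BasicSet (k := k)) S) :
    H.NiceSet S := by
  induction h with
  | @basic s hs =>
      obtain ⟨c, b, hc⟩ := hs
      rcases hc with rfl | rfl | rfl | rfl
      · exact H.nice_lit (LKind.keq, c, b)
      · exact H.nice_lit (LKind.kgt, c, b)
      · exact H.nice_lit (LKind.kin, c, b)
      · exact H.nice_lit (LKind.kplt, c, b)
  | univ => exact H.nice_univ
  | compl _ ih => exact H.nice_compl ih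
  | inter _ _ ih1 ih2 => exact H.nice_inter ih1 ih2

end QEHyp
end Nice

section Proj
variable {F M : Type} [Field F] [LinearOrder F] [IsStrictOrderedRing F] [AddCommGroup M] [LinearOrder M] [IsOrderedAddMonoid M] [Module F M]

/-- Affine data pair. -/
abbrev AffP (F M : Type) (k : ℕ) : Type := (Fin k → F) × M

def affP {k : ℕ} (p : AffP F M k) (x : Fin k → M) : M := aff p.1 p.2 x

def psub {k : ℕ} (p q : AffP F M k) : AffP F M k := (p.1 - q.1, p.2 - q.2)

lemma affP_psub {k : ℕ} (p q : AffP F M k) (x : Fin k → M) :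
    affP (psub p q) x = affP p x - affP q x := aff_sub _ _ _ _ _

/-- Restriction of coefficients to the first `k` variables. -/
def restr {k : ℕ} (c : Fin (k + 1) → F) : Fin k → F := fun i => c i.castSucc

/-- The affine data of `-a⁻¹ • (restr c, b)` where `a` is the last coefficient. -/
def rpair {k : ℕ} (c : Fin (k + 1) → F) (b : M) : AffP F M k :=
  (fun i => -(c (Fin.last k))⁻¹ * c i.castSucc, -(c (Fin.last k))⁻¹ • b)

lemma aff_snoc {k : ℕ} (c : Fin (k + 1) → F) (b : M) (v : Fin k → M) (y : M) :
    aff c b (Fin.snoc v y) = c (Fin.last k) • y + aff (restr c) b v := by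
  simp only [aff, Fin.sum_univ_castSucc, Fin.snoc_castSucc, Fin.snoc_last, restr]
  abel

lemma aff_snoc_key {k : ℕ} (c : Fin (k + 1) → F) (b : M) (v : Fin k → M) (y : M)
    (ha : c (Fin.last k) ≠ 0) :
    aff c b (Fin.snoc v y) = c (Fin.last k) • (y - affP (rpair c b) v) := by
  have h1 : affP (rpair c b) v = -(c (Fin.last k))⁻¹ • aff (restr c) b v := by
    rw [← aff_smul]
    rfl
  have hmul : c (Fin.last k) * -(c (Fin.last k))⁻¹ = -1 := by
    field_simp
  rw [aff_snoc, h1, smul_sub, smul_smul, hmul, neg_one_smul, sub_neg_eq_add]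

lemma fsmul_eq_zero_iff {a : F} (ha : a ≠ 0) (z : M) : a • z = 0 ↔ z = 0 := by
  constructor
  · intro h
    have := congrArg (fun w => a⁻¹ • w) h
    simpa [smul_smul, inv_mul_cancel₀ ha] using this
  · rintro rfl; simp

namespace QEHyp
variable (H : QEHyp F M)

include H in
lemma smul_pos_iff {a : F} (ha : 0 < a) (z : M) : 0 < a • z ↔ 0 < z := by
  constructor
  · intro h
    have := H.hsmul a⁻¹ _ (by positivity) h
    rwa [smul_smul, inv_mul_cancel₀ ha.ne', one_smul] at this
  · exact H.hsmul a z ha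

lemma prec_mk_smul {a : F} (ha : 0 < a) (z : M) :
    H.prec (H.mk' (a • z)) 0 ↔ H.prec (H.mk' z) 0 := by
  have : H.mk' (a • z) = a • H.mk' z := rfl
  rw [this, prec_smul_zero H ha]

end QEHyp

/-- Constraints on the last variable `y` (or `y`-free literals). -/
inductive YC (F M : Type) (k : ℕ) : Type
  | free (l : Lit F M k)
  | yeq (p : AffP F M k)
  | ylo (p : AffP F M k)
  | yhi (p : AffP F M k)
  | yin (p : AffP F M k)
  | ynin (p : AffP F M k)
  | yps (p : AffP F M k)
  | yrs (p : AffP F M k)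

namespace QEHyp
variable (H : QEHyp F M)

def ycSat {k : ℕ} (v : Fin k → M) (y : M) : YC F M k → Prop
  | .free l => v ∈ H.lset l
  | .yeq p => y = affP p v
  | .ylo p => affP p v < y
  | .yhi p => y < affP p v
  | .yin p => y - affP p v ∈ H.Q
  | .ynin p => y - affP p v ∉ H.Q
  | .yps p => H.prec (H.mk' (y - affP p v)) 0
  | .yrs p => H.prec (H.mk' (affP p v - y)) 0

end QEHyp

/-- Classification of a literal in `k+1` variables. -/
def classify {k : ℕ} : Lit F M (k + 1) → YC F M k := fun l =>
  let kd := l.1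
  let c := l.2.1
  let b := l.2.2
  let a := c (Fin.last k)
  if a = 0 then .free (kd, restr c, b)
  else match kd with
    | LKind.keq => .yeq (rpair c b)
    | LKind.kgt => if 0 < a then .ylo (rpair c b) else .yhi (rpair c b)
    | LKind.kin => .yin (rpair c b)
    | LKind.knin => .ynin (rpair c b)
    | LKind.kplt => if 0 < a then .yps (rpair c b) else .yrs (rpair c b)

namespace QEHyp
variable (H : QEHyp F M)

lemma classify_spec {k : ℕ} (l : Lit F M (k + 1)) (v : Fin k → M) (y : M) :
    Fin.snoc v y ∈ H.lset l ↔ H.ycSat v y (classify l) := by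
  obtain ⟨kd, c, b⟩ := l
  by_cases ha : c (Fin.last k) = 0
  · have hval : aff c b (Fin.snoc v y) = aff (restr c) b v := by
      rw [aff_snoc, ha, zero_smul, zero_add]
    simp only [classify, ha, if_pos]
    cases kd <;> simp only [lset, ycSat, Set.mem_setOf_eq, hval]
  · have hval := aff_snoc_key c b v y ha
    have hneg : c (Fin.last k) • (y - affP (rpair c b) v) =
        (-(c (Fin.last k))) • (affP (rpair c b) v - y) := by
      rw [neg_smul, ← smul_neg, neg_sub]
    rcases lt_or_gt_of_ne ha with hlt | hgt
    · have hpos : 0 < -(c (Fin.last k)) := by linarith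
      simp only [classify, ha, if_neg, not_false_iff]
      cases kd
      · simp only [lset, ycSat, Set.mem_setOf_eq, hval]
        rw [fsmul_eq_zero_iff ha, sub_eq_zero]
      · simp only [if_neg (not_lt.mpr hlt.le), lset, ycSat, Set.mem_setOf_eq, hval, hneg]
        rw [H.smul_pos_iff hpos, sub_pos]
      · simp only [lset, ycSat, Set.mem_setOf_eq, hval]
        exact H.Q.smul_mem_iff ha
      · simp only [lset, ycSat, Set.mem_setOf_eq, hval]
        rw [H.Q.smul_mem_iff ha]
      · simp only [if_neg (not_lt.mpr hlt.le), lset, ycSat, Set.mem_setOf_eq, hval, hneg]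
        exact H.prec_mk_smul hpos _
    · simp only [classify, ha, if_neg, not_false_iff]
      cases kd
      · simp only [lset, ycSat, Set.mem_setOf_eq, hval]
        rw [fsmul_eq_zero_iff ha, sub_eq_zero]
      · simp only [if_pos hgt, lset, ycSat, Set.mem_setOf_eq, hval]
        rw [H.smul_pos_iff hgt, sub_pos]
      · simp only [lset, ycSat, Set.mem_setOf_eq, hval]
        exact H.Q.smul_mem_iff ha
      · simp only [lset, ycSat, Set.mem_setOf_eq, hval]
        rw [H.Q.smul_mem_iff ha]
      · simp only [if_pos hgt, lset, ycSat, Set.mem_setOf_eq, hval]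
        exact H.prec_mk_smul hgt _

end QEHyp
end Proj

section Buckets
variable {F M : Type} [Field F] [LinearOrder F] [IsStrictOrderedRing F] [AddCommGroup M] [LinearOrder M] [IsOrderedAddMonoid M] [Module F M]

def getFree {k : ℕ} : YC F M k → Option (Lit F M k)
  | .free l => some l | _ => none
def getEq {k : ℕ} : YC F M k → Option (AffP F M k)
  | .yeq p => some p | _ => none
def getLo {k : ℕ} : YC F M k → Option (AffP F M k)
  | .ylo p => some p | _ => none
def getHi {k : ℕ} : YC F M k → Option (AffP F M k)
  | .yhi p => some p | _ => none
def getIn {k : ℕ} : YC F M k → Option (AffP F M k)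
  | .yin p => some p | _ => none
def getNin {k : ℕ} : YC F M k → Option (AffP F M k)
  | .ynin p => some p | _ => none
def getPs {k : ℕ} : YC F M k → Option (AffP F M k)
  | .yps p => some p | _ => none
def getRs {k : ℕ} : YC F M k → Option (AffP F M k)
  | .yrs p => some p | _ => none

namespace QEHyp
variable (H : QEHyp F M)

lemma sat_buckets {k : ℕ} (ycs : List (YC F M k)) (v : Fin k → M) (y : M) :
    (∀ yc ∈ ycs, H.ycSat v y yc) ↔
      (v ∈ H.cellSet (ycs.filterMap getFree) ∧
       (∀ p ∈ ycs.filterMap getEq, y = affP p v) ∧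
       (∀ p ∈ ycs.filterMap getLo, affP p v < y) ∧
       (∀ p ∈ ycs.filterMap getHi, y < affP p v) ∧
       (∀ p ∈ ycs.filterMap getIn, y - affP p v ∈ H.Q) ∧
       (∀ p ∈ ycs.filterMap getNin, y - affP p v ∉ H.Q) ∧
       (∀ p ∈ ycs.filterMap getPs, H.prec (H.mk' (y - affP p v)) 0) ∧
       (∀ p ∈ ycs.filterMap getRs, H.prec (H.mk' (affP p v - y)) 0)) := by
  induction ycs with
  | nil =>
      simp [cellSet]
  | cons yc rest ih =>
      rw [List.forall_mem_cons, ih]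
      cases yc <;>
        simp only [List.filterMap_cons, getFree, getEq, getLo, getHi, getIn, getNin, getPs,
          getRs, ycSat, cellSet, Set.mem_setOf_eq, List.forall_mem_cons] <;>
        tauto

end QEHyp
end Buckets

section ProjCell
variable {F M : Type} [Field F] [LinearOrder F] [IsStrictOrderedRing F] [AddCommGroup M] [LinearOrder M] [IsOrderedAddMonoid M] [Module F M]

namespace QEHyp
variable (H : QEHyp F M)

lemma lset_keq {k : ℕ} (p : AffP F M k) : H.lset (LKind.keq, p) = {x | affP p x = 0} := rfl
lemma lset_kgt {k : ℕ} (p : AffP F M k) : H.lset (LKind.kgt, p) = {x | 0 < affP p x} := rfl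
lemma lset_kin {k : ℕ} (p : AffP F M k) : H.lset (LKind.kin, p) = {x | affP p x ∈ H.Q} := rfl
lemma lset_knin {k : ℕ} (p : AffP F M k) : H.lset (LKind.knin, p) = {x | affP p x ∉ H.Q} := rfl
lemma lset_kplt {k : ℕ} (p : AffP F M k) :
    H.lset (LKind.kplt, p) = {x | H.prec (H.mk' (affP p x)) 0} := rfl

lemma mem_keq_psub {k : ℕ} (q e : AffP F M k) (v : Fin k → M) :
    v ∈ H.lset (LKind.keq, psub q e) ↔ affP q v = affP e v := by
  rw [lset_keq]
  simp only [Set.mem_setOf_eq, affP_psub, sub_eq_zero]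

lemma mem_kgt_psub {k : ℕ} (q p : AffP F M k) (v : Fin k → M) :
    v ∈ H.lset (LKind.kgt, psub q p) ↔ affP p v < affP q v := by
  rw [lset_kgt]
  simp only [Set.mem_setOf_eq, affP_psub, sub_pos]

lemma mem_kin_psub {k : ℕ} (q p : AffP F M k) (v : Fin k → M) :
    v ∈ H.lset (LKind.kin, psub q p) ↔ affP q v - affP p v ∈ H.Q := by
  rw [lset_kin]
  simp only [Set.mem_setOf_eq, affP_psub]

lemma mem_knin_psub {k : ℕ} (q p : AffP F M k) (v : Fin k → M) :
    v ∈ H.lset (LKind.knin, psub q p) ↔ affP q v - affP p v ∉ H.Q := by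
  rw [lset_knin]
  simp only [Set.mem_setOf_eq, affP_psub]

lemma mem_kplt_psub {k : ℕ} (q p : AffP F M k) (v : Fin k → M) :
    v ∈ H.lset (LKind.kplt, psub q p) ↔ H.prec (H.mk' (affP q v - affP p v)) 0 := by
  rw [lset_kplt]
  simp only [Set.mem_setOf_eq, affP_psub]

lemma mem_cellSet_map {α : Type} {k : ℕ} (f : α → Lit F M k) (l : List α) (v : Fin k → M) :
    v ∈ H.cellSet (l.map f) ↔ ∀ a ∈ l, v ∈ H.lset (f a) := by
  simp [cellSet]

lemma mem_cellSet_flatMap {α β : Type} {k : ℕ} (g : α → List β) (f : α → β → Lit F M k)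
    (l : List α) (v : Fin k → M) :
    v ∈ H.cellSet (l.flatMap fun a => (g a).map (f a)) ↔
      ∀ a ∈ l, ∀ b ∈ g a, v ∈ H.lset (f a b) := by
  simp only [cellSet, Set.mem_setOf_eq, List.mem_flatMap, List.mem_map]
  constructor
  · intro h a ha b hb
    exact h _ ⟨a, ha, b, hb, rfl⟩
  · rintro h l' ⟨a, ha, b, hb, rfl⟩
    exact h a ha b hb

lemma proj_cell {k : ℕ} (cell : List (Lit F M (k + 1))) :
    BoolComb (H.BasicSet (k := k)) {v : Fin k → M | ∃ y : M, Fin.snoc v y ∈ H.cellSet cell} := by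
  classical
  set ycs : List (YC F M k) := cell.map classify with hycs
  have hmem : ∀ (v : Fin k → M) (y : M),
      Fin.snoc v y ∈ H.cellSet cell ↔ ∀ yc ∈ ycs, H.ycSat v y yc := by
    intro v y
    simp only [cellSet, Set.mem_setOf_eq, hycs, List.mem_map]
    constructor
    · rintro h yc ⟨l, hl, rfl⟩
      exact (H.classify_spec l v y).mp (h l hl)
    · intro h l hl
      exact (H.classify_spec l v y).mpr (h (classify l) ⟨l, hl, rfl⟩)
  rcases heq : ycs.filterMap getEq with _ | ⟨q, eqs'⟩
  · rcases hin : ycs.filterMap getIn with _ | ⟨c0, cins'⟩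
    · -- no equalities, no coset memberships
      have hset : {v : Fin k → M | ∃ y : M, Fin.snoc v y ∈ H.cellSet cell} =
          H.cellSet ((ycs.filterMap getFree) ++
            ((ycs.filterMap getLo).flatMap fun l =>
              (ycs.filterMap getHi).map fun u => (LKind.kgt, psub u l)) ++
            ((ycs.filterMap getRs).flatMap fun r =>
              (ycs.filterMap getPs).map fun p => (LKind.kplt, psub r p))) := by
        ext v
        rw [Set.mem_setOf_eq]
        simp only [cellSet_append, Set.mem_inter_iff, mem_cellSet_flatMap]
        constructor
        · rintro ⟨y, hy⟩
          rw [hmem, H.sat_buckets] at hy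
          obtain ⟨hfree, _, hLo, hHi, _, hNin, hPs, hRs⟩ := hy
          refine ⟨⟨hfree, fun l hl u hu => ?_⟩, fun r hr p hp => ?_⟩
          · rw [mem_kgt_psub]
            exact lt_trans (hLo l hl) (hHi u hu)
          · rw [mem_kplt_psub, prec_mk_sub_iff]
            exact H.htrans _ _ _ ((H.prec_mk_sub_iff _ _).mp (hRs r hr))
              ((H.prec_mk_sub_iff _ _).mp (hPs p hp))
        · rintro ⟨⟨hfree, hLU⟩, hRP⟩
          have := (H.existsY_nil ((ycs.filterMap getLo).map (fun p => affP p v))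
              ((ycs.filterMap getHi).map (fun p => affP p v))
              ((ycs.filterMap getNin).map (fun p => affP p v))
              ((ycs.filterMap getPs).map (fun p => affP p v))
              ((ycs.filterMap getRs).map (fun p => affP p v))).mpr
          obtain ⟨y, h1, h2, h3, h4, h5⟩ := this (by
            constructor
            · intro l hl u hu
              simp only [List.mem_map] at hl hu
              obtain ⟨l', hl', rfl⟩ := hl
              obtain ⟨u', hu', rfl⟩ := hu
              exact (H.mem_kgt_psub u' l' v).mp (hLU l' hl' u' hu')
            · intro r hr p hp
              simp only [List.mem_map] at hr hp
              obtain ⟨r', hr', rfl⟩ := hr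
              obtain ⟨p', hp', rfl⟩ := hp
              exact (H.mem_kplt_psub r' p' v).mp (hRP r' hr' p' hp'))
          refine ⟨y, ?_⟩
          rw [hmem, H.sat_buckets, heq, hin]
          refine ⟨hfree, by simp, ?_, ?_, by simp, ?_, ?_, ?_⟩
          · intro p hp
            exact h1 _ (List.mem_map_of_mem hp)
          · intro p hp
            exact h2 _ (List.mem_map_of_mem hp)
          · intro p hp
            exact h3 _ (List.mem_map_of_mem hp)
          · intro p hp
            exact h4 _ (List.mem_map_of_mem hp)
          · intro p hp
            exact h5 _ (List.mem_map_of_mem hp)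
      rw [hset]
      exact H.cell_bc _
    · -- coset membership pinned to `c0`
      have hset : {v : Fin k → M | ∃ y : M, Fin.snoc v y ∈ H.cellSet cell} =
          H.cellSet ((ycs.filterMap getFree) ++
            ((ycs.filterMap getLo).flatMap fun l =>
              (ycs.filterMap getHi).map fun u => (LKind.kgt, psub u l)) ++
            (cins'.map fun p => (LKind.kin, psub c0 p)) ++
            ((ycs.filterMap getNin).map fun p => (LKind.knin, psub c0 p)) ++
            ((ycs.filterMap getPs).map fun p => (LKind.kplt, psub c0 p)) ++
            ((ycs.filterMap getRs).map fun p => (LKind.kplt, psub p c0))) := by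
        ext v
        rw [Set.mem_setOf_eq]
        simp only [cellSet_append, Set.mem_inter_iff, mem_cellSet_flatMap, mem_cellSet_map]
        constructor
        · rintro ⟨y, hy⟩
          rw [hmem, H.sat_buckets] at hy
          obtain ⟨hfree, _, hLo, hHi, hIn, hNin, hPs, hRs⟩ := hy
          rw [hin, List.forall_mem_cons] at hIn
          obtain ⟨hc0, hIn'⟩ := hIn
          have hclass : H.mk' y = H.mk' (affP c0 v) := (H.sub_mem_iff _ _).mp hc0
          refine ⟨⟨⟨⟨⟨hfree, fun l hl u hu => ?_⟩, fun p hp => ?_⟩, fun p hp => ?_⟩,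
            fun p hp => ?_⟩, fun p hp => ?_⟩
          · rw [mem_kgt_psub]
            exact lt_trans (hLo l hl) (hHi u hu)
          · rw [mem_kin_psub, sub_mem_iff, ← hclass, ← sub_mem_iff]
            exact hIn' p hp
          · rw [mem_knin_psub, sub_mem_iff, ← hclass, ← sub_mem_iff]
            exact hNin p hp
          · rw [mem_kplt_psub, prec_mk_sub_iff, ← hclass, ← prec_mk_sub_iff]
            exact hPs p hp
          · rw [mem_kplt_psub, prec_mk_sub_iff, ← hclass, ← prec_mk_sub_iff]
            exact hRs p hp
        · rintro ⟨⟨⟨⟨⟨hfree, hLU⟩, hIn'⟩, hNin⟩, hPs⟩, hRs⟩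
          have := (H.existsY_cons (affP c0 v)
              ((ycs.filterMap getLo).map (fun p => affP p v))
              ((ycs.filterMap getHi).map (fun p => affP p v))
              (cins'.map (fun p => affP p v))
              ((ycs.filterMap getNin).map (fun p => affP p v))
              ((ycs.filterMap getPs).map (fun p => affP p v))
              ((ycs.filterMap getRs).map (fun p => affP p v))).mpr
          obtain ⟨y, h1, h2, ⟨hc0, h3⟩, h4, h5, h6⟩ := this (by
            refine ⟨?_, ?_, ?_, ?_, ?_⟩
            · intro l hl u hu
              simp only [List.mem_map] at hl hu
              obtain ⟨l', hl', rfl⟩ := hl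
              obtain ⟨u', hu', rfl⟩ := hu
              exact (H.mem_kgt_psub u' l' v).mp (hLU l' hl' u' hu')
            · intro c' hc'
              simp only [List.mem_map] at hc'
              obtain ⟨p, hp, rfl⟩ := hc'
              exact (H.mem_kin_psub c0 p v).mp (hIn' p hp)
            · intro d hd
              simp only [List.mem_map] at hd
              obtain ⟨p, hp, rfl⟩ := hd
              exact (H.mem_knin_psub c0 p v).mp (hNin p hp)
            · intro p hp
              simp only [List.mem_map] at hp
              obtain ⟨p', hp', rfl⟩ := hp
              exact (H.mem_kplt_psub c0 p' v).mp (hPs p' hp')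
            · intro r hr
              simp only [List.mem_map] at hr
              obtain ⟨r', hr', rfl⟩ := hr
              exact (H.mem_kplt_psub r' c0 v).mp (hRs r' hr'))
          refine ⟨y, ?_⟩
          rw [hmem, H.sat_buckets, heq, hin]
          refine ⟨hfree, by simp, ?_, ?_, ?_, ?_, ?_, ?_⟩
          · intro p hp
            exact h1 _ (List.mem_map_of_mem hp)
          · intro p hp
            exact h2 _ (List.mem_map_of_mem hp)
          · rw [List.forall_mem_cons]
            exact ⟨hc0, fun p hp => h3 _ (List.mem_map_of_mem hp)⟩
          · intro p hp
            exact h4 _ (List.mem_map_of_mem hp)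
          · intro p hp
            exact h5 _ (List.mem_map_of_mem hp)
          · intro p hp
            exact h6 _ (List.mem_map_of_mem hp)
      rw [hset]
      exact H.cell_bc _
  · -- an equality pins `y`
    have hset : {v : Fin k → M | ∃ y : M, Fin.snoc v y ∈ H.cellSet cell} =
        H.cellSet ((ycs.filterMap getFree) ++
          (eqs'.map fun e => (LKind.keq, psub q e)) ++
          ((ycs.filterMap getLo).map fun p => (LKind.kgt, psub q p)) ++
          ((ycs.filterMap getHi).map fun p => (LKind.kgt, psub p q)) ++
          ((ycs.filterMap getIn).map fun p => (LKind.kin, psub q p)) ++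
          ((ycs.filterMap getNin).map fun p => (LKind.knin, psub q p)) ++
          ((ycs.filterMap getPs).map fun p => (LKind.kplt, psub q p)) ++
          ((ycs.filterMap getRs).map fun p => (LKind.kplt, psub p q))) := by
      ext v
      rw [Set.mem_setOf_eq]
      simp only [cellSet_append, Set.mem_inter_iff, mem_cellSet_map]
      constructor
      · rintro ⟨y, hy⟩
        rw [hmem, H.sat_buckets] at hy
        obtain ⟨hfree, hEq, hLo, hHi, hIn, hNin, hPs, hRs⟩ := hy
        rw [heq, List.forall_mem_cons] at hEq
        obtain ⟨hyq, hEq'⟩ := hEq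
        subst hyq
        refine ⟨⟨⟨⟨⟨⟨⟨hfree, fun e he => ?_⟩, fun p hp => ?_⟩, fun p hp => ?_⟩,
          fun p hp => ?_⟩, fun p hp => ?_⟩, fun p hp => ?_⟩, fun p hp => ?_⟩
        · rw [mem_keq_psub]
          exact hEq' e he
        · rw [mem_kgt_psub]
          exact hLo p hp
        · rw [mem_kgt_psub]
          exact hHi p hp
        · rw [mem_kin_psub]
          exact hIn p hp
        · rw [mem_knin_psub]
          exact hNin p hp
        · rw [mem_kplt_psub]
          exact hPs p hp
        · rw [mem_kplt_psub]
          exact hRs p hp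
      · rintro ⟨⟨⟨⟨⟨⟨⟨hfree, hEq'⟩, hLo⟩, hHi⟩, hIn⟩, hNin⟩, hPs⟩, hRs⟩
        refine ⟨affP q v, ?_⟩
        rw [hmem, H.sat_buckets, heq]
        refine ⟨hfree, ?_, ?_, ?_, ?_, ?_, ?_, ?_⟩
        · rw [List.forall_mem_cons]
          exact ⟨rfl, fun e he => (H.mem_keq_psub q e v).mp (hEq' e he)⟩
        · intro p hp
          exact (H.mem_kgt_psub q p v).mp (hLo p hp)
        · intro p hp
          exact (H.mem_kgt_psub p q v).mp (hHi p hp)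
        · intro p hp
          exact (H.mem_kin_psub q p v).mp (hIn p hp)
        · intro p hp
          exact (H.mem_knin_psub q p v).mp (hNin p hp)
        · intro p hp
          exact (H.mem_kplt_psub q p v).mp (hPs p hp)
        · intro p hp
          exact (H.mem_kplt_psub p q v).mp (hRs p hp)
    rw [hset]
    exact H.cell_bc _


end QEHyp
end ProjCell

section FormulaLayer
variable {F M : Type} [Field F] [LinearOrder F] [IsStrictOrderedRing F] [AddCommGroup M] [LinearOrder M] [IsOrderedAddMonoid M] [Module F M]

namespace QEHyp
variable (H : QEHyp F M)

lemma proj_cells {k : ℕ} (cells : List (List (Lit F M (k + 1)))) :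
    BoolComb (H.BasicSet (k := k))
      {v : Fin k → M | ∃ y : M, ∃ c ∈ cells, Fin.snoc v y ∈ H.cellSet c} := by
  induction cells with
  | nil =>
      have : {v : Fin k → M | ∃ y : M, ∃ c ∈ ([] : List (List (Lit F M (k + 1)))),
          Fin.snoc v y ∈ H.cellSet c} = ∅ := by
        ext v; simp
      rw [this]
      exact QEHyp.bc_empty
  | cons cell rest ih =>
      have : {v : Fin k → M | ∃ y : M, ∃ c ∈ cell :: rest, Fin.snoc v y ∈ H.cellSet c} =
          {v : Fin k → M | ∃ y : M, Fin.snoc v y ∈ H.cellSet cell} ∪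
          {v : Fin k → M | ∃ y : M, ∃ c ∈ rest, Fin.snoc v y ∈ H.cellSet c} := by
        ext v
        simp only [Set.mem_union, Set.mem_setOf_eq, List.mem_cons]
        constructor
        · rintro ⟨y, c, (rfl | hc), hy⟩
          · exact Or.inl ⟨y, hy⟩
          · exact Or.inr ⟨y, c, hc, hy⟩
        · rintro (⟨y, hy⟩ | ⟨y, c, hc, hy⟩)
          · exact ⟨y, cell, Or.inl rfl, hy⟩
          · exact ⟨y, c, Or.inr hc, hy⟩
      rw [this]
      exact bc_union (H.proj_cell cell) ih

lemma proj_bc {k : ℕ} {T : Set (Fin (k + 1) → M)} (hT : BoolComb (H.BasicSet (k := k + 1)) T) :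
    BoolComb (H.BasicSet (k := k)) {v : Fin k → M | ∃ y : M, Fin.snoc v y ∈ T} := by
  obtain ⟨cells, rfl⟩ := H.bc_nice hT
  have : {v : Fin k → M | ∃ y : M, Fin.snoc v y ∈
      {x | ∃ c ∈ cells, x ∈ H.cellSet c}} =
      {v : Fin k → M | ∃ y : M, ∃ c ∈ cells, Fin.snoc v y ∈ H.cellSet c} := by
    ext v; simp only [Set.mem_setOf_eq]
  rw [this]
  exact H.proj_cells cells

/-- The structure on `M` determined by the data of `H`. -/
def struc : (LP' F).Structure M := LP'Struc F M H.one H.Q H.prec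

end QEHyp

/-- Coefficient vector of a single variable. -/
def unitv {m : ℕ} (i : Fin m) : Fin m → F := fun j => if j = i then 1 else 0

lemma aff_unitv {m : ℕ} (i : Fin m) (w : Fin m → M) : aff (unitv (F := F) i) 0 w = w i := by
  simp only [aff, unitv, ite_smul, one_smul, zero_smul, add_zero]
  rw [Finset.sum_ite_eq' Finset.univ i (fun j => w j)]
  simp

lemma aff_const {m : ℕ} (b : M) (w : Fin m → M) : aff (0 : Fin m → F) b w = b := by
  simp [aff]

/-- The environment plugging coordinates of `w` into both free and bound variables. -/
def envp (n l : ℕ) (w : Fin (n + l) → M) : (↥(Set.univ : Set M) ⊕ Fin n) ⊕ Fin l → M :=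
  Sum.elim (Sum.elim (fun a => (a : M)) (fun i => w (Fin.castAdd l i)))
    (fun j => w (Fin.natAdd n j))

section Struc
variable (H : QEHyp F M) [S : (LP' F).Structure M]

lemma term_affine (hs : S = H.struc) {n l : ℕ}
    (t : (LP' F).Term ((↥(Set.univ : Set M) ⊕ Fin n) ⊕ Fin l)) :
    ∃ (c : Fin (n + l) → F) (b : M), ∀ w : Fin (n + l) → M,
      t.realize (envp n l w) = aff c b w := by
  subst hs
  letI : (LP' F).Structure M := H.struc
  induction t with
  | var s =>
      rcases s with (a | i) | j
      · exact ⟨0, (a : M), fun w => by simp [envp, aff_const]⟩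
      · exact ⟨unitv (Fin.castAdd l i), 0, fun w => by simp [envp, aff_unitv]⟩
      · exact ⟨unitv (Fin.natAdd n j), 0, fun w => by simp [envp, aff_unitv]⟩
  | @func m f ts ih =>
      cases f with
      | add =>
          obtain ⟨c0, b0, h0⟩ := ih 0
          obtain ⟨c1, b1, h1⟩ := ih 1
          refine ⟨c0 + c1, b0 + b1, fun w => ?_⟩
          rw [aff_add]
          show (ts 0).realize (envp n l w) + (ts 1).realize (envp n l w) = _
          rw [h0, h1]
      | neg =>
          obtain ⟨c0, b0, h0⟩ := ih 0
          refine ⟨-c0, -b0, fun w => ?_⟩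
          rw [aff_neg]
          show -((ts 0).realize (envp n l w)) = _
          rw [h0]
      | zero =>
          refine ⟨0, 0, fun w => ?_⟩
          rw [aff_const]
          rfl
      | one =>
          refine ⟨0, H.one, fun w => ?_⟩
          rw [aff_const]
          rfl
      | smul d =>
          obtain ⟨c0, b0, h0⟩ := ih 0
          refine ⟨d • c0, d • b0, fun w => ?_⟩
          rw [aff_smul]
          show d • ((ts 0).realize (envp n l w)) = _
          rw [h0]

end Struc
end FormulaLayer

section FormulaBC
variable {F M : Type} [Field F] [LinearOrder F] [IsStrictOrderedRing F] [AddCommGroup M] [LinearOrder M] [IsOrderedAddMonoid M] [Module F M]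
variable (H : QEHyp F M) [S : (LP' F).Structure M]

lemma formula_bc (hs : S = H.struc) {n : ℕ} :
    ∀ {l : ℕ} (φ : (LP' F).BoundedFormula (↥(Set.univ : Set M) ⊕ Fin n) l),
    BoolComb (H.BasicSet (k := n + l))
      {w : Fin (n + l) → M | φ.Realize
        (Sum.elim (fun a => (a : M)) (fun i => w (Fin.castAdd l i)))
        (fun j => w (Fin.natAdd n j))} := by
  subst hs
  letI : (LP' F).Structure M := H.struc
  intro l φ
  induction φ with
  | @falsum l =>
      have : {w : Fin (n + l) → M | BoundedFormula.Realize
          (BoundedFormula.falsum : (LP' F).BoundedFormula (↥(Set.univ : Set M) ⊕ Fin n) l)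
          (Sum.elim (fun a => (a : M)) (fun i => w (Fin.castAdd l i)))
          (fun j => w (Fin.natAdd n j))} = (∅ : Set (Fin (n + l) → M)) := by
        ext w
        simp only [Set.mem_setOf_eq, Set.mem_empty_iff_false, iff_false]
        exact fun h => h
      rw [this]
      exact QEHyp.bc_empty
  | @equal l t₁ t₂ =>
      obtain ⟨c1, b1, h1⟩ := term_affine H rfl t₁
      obtain ⟨c2, b2, h2⟩ := term_affine H rfl t₂
      have hset : {w : Fin (n + l) → M | BoundedFormula.Realize (BoundedFormula.equal t₁ t₂)
          (Sum.elim (fun a => (a : M)) (fun i => w (Fin.castAdd l i)))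
          (fun j => w (Fin.natAdd n j))} =
          {w : Fin (n + l) → M | aff (c1 - c2) (b1 - b2) w = 0} := by
        ext w
        have h1' := h1 w
        have h2' := h2 w
        simp only [envp] at h1' h2'
        simp only [Set.mem_setOf_eq]
        have hr : BoundedFormula.Realize (BoundedFormula.equal t₁ t₂)
            (Sum.elim (fun a => (a : M)) (fun i => w (Fin.castAdd l i)))
            (fun j => w (Fin.natAdd n j)) ↔
            Term.realize (Sum.elim (Sum.elim (fun a : ↥(Set.univ : Set M) => (a : M))
              (fun i => w (Fin.castAdd l i))) (fun j => w (Fin.natAdd n j))) t₁ =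
            Term.realize (Sum.elim (Sum.elim (fun a : ↥(Set.univ : Set M) => (a : M))
              (fun i => w (Fin.castAdd l i))) (fun j => w (Fin.natAdd n j))) t₂ := Iff.rfl
        rw [hr, h1', h2', aff_sub, sub_eq_zero]
      rw [hset]
      exact BoolComb.basic ⟨c1 - c2, b1 - b2, Or.inl rfl⟩
  | @rel l m R ts =>
      cases R with
      | lt =>
          obtain ⟨c0, b0, h0⟩ := term_affine H rfl (ts 0)
          obtain ⟨c1, b1, h1⟩ := term_affine H rfl (ts 1)
          have hset : {w : Fin (n + l) → M | BoundedFormula.Realize (BoundedFormula.rel LPRel'.lt ts)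
              (Sum.elim (fun a => (a : M)) (fun i => w (Fin.castAdd l i)))
              (fun j => w (Fin.natAdd n j))} =
              {w : Fin (n + l) → M | 0 < aff (c1 - c0) (b1 - b0) w} := by
            ext w
            have h0' := h0 w
            have h1' := h1 w
            simp only [envp] at h0' h1'
            simp only [Set.mem_setOf_eq]
            have hr : BoundedFormula.Realize (BoundedFormula.rel LPRel'.lt ts)
                (Sum.elim (fun a => (a : M)) (fun i => w (Fin.castAdd l i)))
                (fun j => w (Fin.natAdd n j)) ↔
                Term.realize (Sum.elim (Sum.elim (fun a : ↥(Set.univ : Set M) => (a : M))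
                  (fun i => w (Fin.castAdd l i))) (fun j => w (Fin.natAdd n j))) (ts 0) <
                Term.realize (Sum.elim (Sum.elim (fun a : ↥(Set.univ : Set M) => (a : M))
                  (fun i => w (Fin.castAdd l i))) (fun j => w (Fin.natAdd n j))) (ts 1) := Iff.rfl
            rw [hr, h0', h1', aff_sub, sub_pos]
          rw [hset]
          exact BoolComb.basic ⟨c1 - c0, b1 - b0, Or.inr (Or.inl rfl)⟩
      | q =>
          obtain ⟨c0, b0, h0⟩ := term_affine H rfl (ts 0)
          have hset : {w : Fin (n + l) → M | BoundedFormula.Realize (BoundedFormula.rel LPRel'.q ts)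
              (Sum.elim (fun a => (a : M)) (fun i => w (Fin.castAdd l i)))
              (fun j => w (Fin.natAdd n j))} =
              {w : Fin (n + l) → M | aff c0 b0 w ∈ H.Q} := by
            ext w
            have h0' := h0 w
            simp only [envp] at h0'
            simp only [Set.mem_setOf_eq]
            have hr : BoundedFormula.Realize (BoundedFormula.rel LPRel'.q ts)
                (Sum.elim (fun a => (a : M)) (fun i => w (Fin.castAdd l i)))
                (fun j => w (Fin.natAdd n j)) ↔
                Term.realize (Sum.elim (Sum.elim (fun a : ↥(Set.univ : Set M) => (a : M))
                  (fun i => w (Fin.castAdd l i))) (fun j => w (Fin.natAdd n j))) (ts 0) ∈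
                  H.Q := Iff.rfl
            rw [hr, h0']
          rw [hset]
          exact BoolComb.basic ⟨c0, b0, Or.inr (Or.inr (Or.inl rfl))⟩
      | plt =>
          obtain ⟨c0, b0, h0⟩ := term_affine H rfl (ts 0)
          obtain ⟨c1, b1, h1⟩ := term_affine H rfl (ts 1)
          have hset : {w : Fin (n + l) → M | BoundedFormula.Realize (BoundedFormula.rel LPRel'.plt ts)
              (Sum.elim (fun a => (a : M)) (fun i => w (Fin.castAdd l i)))
              (fun j => w (Fin.natAdd n j))} =
              {w : Fin (n + l) → M |
                H.prec (Submodule.Quotient.mk (aff (c0 - c1) (b0 - b1) w)) 0} := by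
            ext w
            have h0' := h0 w
            have h1' := h1 w
            simp only [envp] at h0' h1'
            simp only [Set.mem_setOf_eq]
            have hr : BoundedFormula.Realize (BoundedFormula.rel LPRel'.plt ts)
                (Sum.elim (fun a => (a : M)) (fun i => w (Fin.castAdd l i)))
                (fun j => w (Fin.natAdd n j)) ↔
                H.prec (Submodule.Quotient.mk (Term.realize (Sum.elim (Sum.elim (fun a : ↥(Set.univ : Set M) => (a : M))
                  (fun i => w (Fin.castAdd l i))) (fun j => w (Fin.natAdd n j))) (ts 0)))
                  (Submodule.Quotient.mk (Term.realize (Sum.elim (Sum.elim (fun a : ↥(Set.univ : Set M) => (a : M))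
                  (fun i => w (Fin.castAdd l i))) (fun j => w (Fin.natAdd n j))) (ts 1))) := Iff.rfl
            rw [hr, h0', h1', aff_sub]
            exact (H.prec_mk_sub_iff _ _).symm
          rw [hset]
          exact BoolComb.basic ⟨c0 - c1, b0 - b1, Or.inr (Or.inr (Or.inr rfl))⟩
  | @imp l φ ψ ih1 ih2 =>
      have hset : {w : Fin (n + l) → M | BoundedFormula.Realize (φ.imp ψ)
          (Sum.elim (fun a => (a : M)) (fun i => w (Fin.castAdd l i)))
          (fun j => w (Fin.natAdd n j))} =
          ({w : Fin (n + l) → M | BoundedFormula.Realize φ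
            (Sum.elim (fun a => (a : M)) (fun i => w (Fin.castAdd l i)))
            (fun j => w (Fin.natAdd n j))} ∩
           {w : Fin (n + l) → M | BoundedFormula.Realize ψ
            (Sum.elim (fun a => (a : M)) (fun i => w (Fin.castAdd l i)))
            (fun j => w (Fin.natAdd n j))}ᶜ)ᶜ := by
        ext w
        simp only [Set.mem_setOf_eq, BoundedFormula.realize_imp, Set.mem_compl_iff,
          Set.mem_inter_iff, not_and, not_not]
      rw [hset]
      exact (ih1.inter ih2.compl).compl
  | @all l φ' ih =>
      have hsnoc : ∀ (w : Fin (n + l) → M) (y : M),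
          ((Fin.snoc w y : Fin (n + l + 1) → M) ∈
            {w' : Fin (n + (l + 1)) → M | BoundedFormula.Realize φ'
              (Sum.elim (fun a => (a : M)) (fun i => w' (Fin.castAdd (l + 1) i)))
              (fun j => w' (Fin.natAdd n j))}) ↔
          BoundedFormula.Realize φ'
            (Sum.elim (fun a => (a : M)) (fun i => w (Fin.castAdd l i)))
            (Fin.snoc (fun j => w (Fin.natAdd n j)) y) := by
        intro w y
        show BoundedFormula.Realize φ'
            (Sum.elim (fun a => (a : M))
              (fun i => (Fin.snoc w y : Fin (n + l + 1) → M) (Fin.castAdd (l + 1) i)))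
            (fun j => (Fin.snoc w y : Fin (n + l + 1) → M) (Fin.natAdd n j)) ↔ _
        have e1 : (fun i => (Fin.snoc w y : Fin (n + l + 1) → M) (Fin.castAdd (l + 1) i)) =
            fun i => w (Fin.castAdd l i) := by
          funext i
          have hc : (Fin.castAdd (l + 1) i : Fin (n + (l + 1))) =
              Fin.castSucc (Fin.castAdd l i) := by
            apply Fin.ext
            simp [Fin.castAdd, Fin.castSucc]
          rw [hc, Fin.snoc_castSucc]
        have e2 : (fun j => (Fin.snoc w y : Fin (n + l + 1) → M) (Fin.natAdd n j)) =
            Fin.snoc (fun j => w (Fin.natAdd n j)) y := by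
          funext j
          refine Fin.lastCases ?_ ?_ j
          · have hc : (Fin.natAdd n (Fin.last l) : Fin (n + (l + 1))) = Fin.last (n + l) := by
              apply Fin.ext
              simp
            rw [hc, Fin.snoc_last, Fin.snoc_last]
          · intro j'
            have hc : (Fin.natAdd n (Fin.castSucc j') : Fin (n + (l + 1))) =
                Fin.castSucc (Fin.natAdd n j') := by
              apply Fin.ext
              simp
            rw [hc, Fin.snoc_castSucc, Fin.snoc_castSucc]
        rw [e1, e2]
      have hall : {w : Fin (n + l) → M | BoundedFormula.Realize φ'.all
          (Sum.elim (fun a => (a : M)) (fun i => w (Fin.castAdd l i)))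
          (fun j => w (Fin.natAdd n j))} =
          ({v : Fin (n + l) → M | ∃ y : M, (Fin.snoc v y : Fin (n + l + 1) → M) ∈
            ({w' : Fin (n + (l + 1)) → M | BoundedFormula.Realize φ'
              (Sum.elim (fun a => (a : M)) (fun i => w' (Fin.castAdd (l + 1) i)))
              (fun j => w' (Fin.natAdd n j))})ᶜ})ᶜ := by
        ext w
        simp only [Set.mem_setOf_eq, BoundedFormula.realize_all, Set.mem_compl_iff, not_exists]
        constructor
        · intro h y hy
          exact hy ((hsnoc w y).mpr (h y))
        · intro h y
          by_contra hc
          exact h y (fun ht => hc ((hsnoc w y).mp ht))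
      rw [hall]
      exact (H.proj_bc (BoolComb.compl ih)).compl

end FormulaBC

end QEAux

/-- Every subset of `Mⁿ` definable with parameters in the expanded
structure is a finite Boolean combination of sets of the forms `{x | t(x) = 0}`,
`{x | t(x) > 0}`, `{x | t(x) ∈ Q}` and `{x | t(x) ≺′ 0}`, where `t` is affine. -/
theorem statement4
    (hsmul : ∀ (c : F) (x : M), 0 < c → 0 < x → 0 < c • x)
    (one : M) (hone : 0 < one)
    (Q : Submodule F M) (hQproper : (Q : Set M) ≠ Set.univ) (honeQ : one ∈ Q)
    (hQdense : ∀ a b : M, a < b → ∃ q ∈ Q, a < q ∧ q < b)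
    (prec : (M ⧸ Q) → (M ⧸ Q) → Prop)
    (hirrefl : ∀ u, ¬ prec u u)
    (htrans : ∀ u v w, prec u v → prec v w → prec u w)
    (htotal : ∀ u v, prec u v ∨ u = v ∨ prec v u)
    (htransl : ∀ u v w, prec u v → prec (u + w) (v + w))
    (hscalar : ∀ (c : F) (v : M ⧸ Q), 0 < c → prec 0 v → prec 0 (c • v))
    (n : ℕ) (S : Set (Fin n → M))
    (hS : letI := LP'Struc F M one Q prec; DefinableIn (LP' F) M S) :
    BoolComb {T : Set (Fin n → M) | ∃ (c : Fin n → F) (b : M),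
        T = {x | (∑ i, c i • x i) + b = 0} ∨
        T = {x | 0 < (∑ i, c i • x i) + b} ∨
        T = {x | (∑ i, c i • x i) + b ∈ Q} ∨
        T = {x | prec (Submodule.Quotient.mk ((∑ i, c i • x i) + b)) 0}} S := by
  letI : (LP' F).Structure M := LP'Struc F M one Q prec
  set H : QEHyp F M :=
    ⟨hsmul, one, hone, Q, hQproper, hQdense, prec, hirrefl, htrans, htotal, htransl, hscalar⟩
    with hH
  have hS' : Set.Definable (Set.univ : Set M) (LP' F) S := hS
  rw [Set.definable_iff_exists_formula_sum] at hS'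
  obtain ⟨φ, rfl⟩ := hS'
  have hbc := formula_bc H (rfl : (LP'Struc F M one Q prec) = H.struc) (l := 0) φ
  have hsets : {w : Fin (n + 0) → M | BoundedFormula.Realize φ
      (Sum.elim (fun a => (a : M)) (fun i => w (Fin.castAdd 0 i)))
      (fun j => w (Fin.natAdd n j))} =
      {v : Fin n → M | Formula.Realize φ (Sum.elim (fun a => (a : M)) v)} := by
    ext w
    have e1 : (fun i => w (Fin.castAdd 0 i)) = w := by
      funext i
      have hi : Fin.castAdd 0 i = i := Fin.ext rfl
      rw [hi]
    have e2 : (fun j : Fin 0 => w (Fin.natAdd n j)) = default := Subsingleton.elim _ _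
    simp only [Set.mem_setOf_eq, e1, e2]
    rfl
  rw [hsets] at hbc
  exact hbc
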